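/- Let Λ be a finite dimensional algebra over an algebraically closed field k and e an idempotent of Λ. If ftors Λ is a lattice (respectively, a complete lattice), then ftors(Λ/⟨e⟩) is a lattice (respectively, a complete lattice), where ⟨e⟩ is the two-sided ideal generated by e; indeed ftors(Λ/⟨e⟩) is isomorphic to the interval {T ∈ ftors Λ | 0 ⊆ T ⊆ mod(Λ/⟨e⟩)} in ftors Λ. -/

import Mathlib

noncomputable section

namespace TorsionLattice


/-! ### Posets: meets and joins (as unique maximal/minimal bounds), semilattices -/

section Posets

variable {P : Type*} [PartialOrder P]

/-- `m` is a maximal element of the subset `S`. -/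
def MaximalIn (S : Set P) (m : P) : Prop := m ∈ S ∧ ∀ y ∈ S, m ≤ y → y = m

/-- `m` is a minimal element of the subset `S`. -/
def MinimalIn (S : Set P) (m : P) : Prop := m ∈ S ∧ ∀ y ∈ S, y ≤ m → y = m

/-- `m` is a meet of `S` : the unique maximal element of the set of lower bounds of `S`. -/
def IsMeetOf (S : Set P) (m : P) : Prop :=
  MaximalIn (lowerBounds S) m ∧ ∀ y, MaximalIn (lowerBounds S) y → y = m

/-- `m` is a join of `S` : the unique minimal element of the set of upper bounds of `S`. -/
def IsJoinOf (S : Set P) (m : P) : Prop :=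
  MinimalIn (upperBounds S) m ∧ ∀ y, MinimalIn (upperBounds S) y → y = m

def HasMeet (S : Set P) : Prop := ∃ m, IsMeetOf S m

def HasJoin (S : Set P) : Prop := ∃ m, IsJoinOf S m

end Posets

/-- Every finite subset has a meet. -/
def IsMeetSemilatticePoset (P : Type*) [PartialOrder P] : Prop :=
  ∀ S : Set P, S.Finite → HasMeet S

/-- Every finite subset has a join. -/
def IsJoinSemilatticePoset (P : Type*) [PartialOrder P] : Prop :=
  ∀ S : Set P, S.Finite → HasJoin S

def IsLatticePoset (P : Type*) [PartialOrder P] : Prop :=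
  IsJoinSemilatticePoset P ∧ IsMeetSemilatticePoset P

def IsCompleteMeetSemilatticePoset (P : Type*) [PartialOrder P] : Prop :=
  ∀ S : Set P, HasMeet S

def IsCompleteJoinSemilatticePoset (P : Type*) [PartialOrder P] : Prop :=
  ∀ S : Set P, HasJoin S

def IsCompleteLatticePoset (P : Type*) [PartialOrder P] : Prop :=
  ∀ S : Set P, HasMeet S ∧ HasJoin S

def PreservesMeets {P Q : Type*} [PartialOrder P] [PartialOrder Q] (f : P → Q) : Prop :=
  ∀ (S : Set P) (m : P), IsMeetOf S m → IsMeetOf (f '' S) (f m)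

def PreservesJoins {P Q : Type*} [PartialOrder P] [PartialOrder Q] (f : P → Q) : Prop :=
  ∀ (S : Set P) (m : P), IsJoinOf S m → IsJoinOf (f '' S) (f m)

/-! ### Torsion classes in `mod Λ`

We model the category `mod Λ` of finite dimensional (equivalently, finitely generated)
`Λ`-modules by the objects of `ModuleCat.{0} Λ` satisfying `Module.Finite Λ`.
Subcategories closed under isomorphisms are modelled as sets of objects. -/

section Torsion

variable (Λ : Type) [Ring Λ]

/-- `0 → X → Y → Z → 0` is a short exact sequence. -/
def IsSES {X Y Z : Type} [AddCommGroup X] [Module Λ X] [AddCommGroup Y] [Module Λ Y]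
    [AddCommGroup Z] [Module Λ Z] (f : X →ₗ[Λ] Y) (g : Y →ₗ[Λ] Z) : Prop :=
  Function.Injective f ∧ Function.Surjective g ∧ LinearMap.range f = LinearMap.ker g

/-- All members of `C` are finite (equivalently, finite dimensional) modules,
i.e. `C` is a subcategory of `mod Λ`. -/
def FinMods (C : Set (ModuleCat.{0} Λ)) : Prop := ∀ X ∈ C, Module.Finite Λ X

/-- `C` is closed under factor modules (in particular under isomorphisms). -/
def QuotClosed (C : Set (ModuleCat.{0} Λ)) : Prop :=
  ∀ X ∈ C, ∀ (Y : ModuleCat.{0} Λ) (f : ↥X →ₗ[Λ] ↥Y), Function.Surjective f → Y ∈ C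

/-- `C` is closed under submodules (in particular under isomorphisms). -/
def SubClosed (C : Set (ModuleCat.{0} Λ)) : Prop :=
  ∀ X ∈ C, ∀ (Y : ModuleCat.{0} Λ) (f : ↥Y →ₗ[Λ] ↥X), Function.Injective f → Y ∈ C

/-- `C` is closed under extensions. -/
def ExtClosed (C : Set (ModuleCat.{0} Λ)) : Prop :=
  ∀ (X Y Z : ModuleCat.{0} Λ) (f : ↥X →ₗ[Λ] ↥Y) (g : ↥Y →ₗ[Λ] ↥Z),
    IsSES Λ f g → X ∈ C → Z ∈ C → Y ∈ C

/-- A torsion class in `mod Λ`: a class of finite dimensional modules closed under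
factor modules, isomorphisms and extensions. -/
def IsTorsionClass (C : Set (ModuleCat.{0} Λ)) : Prop :=
  FinMods Λ C ∧ QuotClosed Λ C ∧ ExtClosed Λ C

/-- A torsionfree class in `mod Λ`: a class of finite dimensional modules closed under
submodules, isomorphisms and extensions. -/
def IsTorsionFreeClass (C : Set (ModuleCat.{0} Λ)) : Prop :=
  FinMods Λ C ∧ SubClosed Λ C ∧ ExtClosed Λ C

/-- `Fac X`: factor modules of finite direct sums of copies of `X`. -/
def Fac (X : ModuleCat.{0} Λ) : Set (ModuleCat.{0} Λ) :=
  {Y | ∃ (n : ℕ) (f : (Fin n → ↥X) →ₗ[Λ] ↥Y), Function.Surjective f}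

/-- `C` is of the form `Fac X` for a finite dimensional module `X`; for a torsion class
this means precisely that `C` is functorially finite in `mod Λ`. -/
def IsFacFinite (C : Set (ModuleCat.{0} Λ)) : Prop :=
  ∃ X : ModuleCat.{0} Λ, Module.Finite Λ X ∧ C = Fac Λ X

/-- A functorially finite torsion class in `mod Λ`. -/
def IsFTorsionClass (C : Set (ModuleCat.{0} Λ)) : Prop :=
  IsTorsionClass Λ C ∧ IsFacFinite Λ C

/-- The poset `tors Λ` of torsion classes, ordered by inclusion. -/
abbrev Tors := {C : Set (ModuleCat.{0} Λ) // IsTorsionClass Λ C}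

/-- The poset `torf Λ` of torsionfree classes, ordered by inclusion. -/
abbrev Torf := {C : Set (ModuleCat.{0} Λ) // IsTorsionFreeClass Λ C}

/-- The poset `ftors Λ` of functorially finite torsion classes, ordered by inclusion. -/
abbrev FTors := {C : Set (ModuleCat.{0} Λ) // IsFTorsionClass Λ C}

/-- `C^⊥ = {X ∈ mod Λ ∣ Hom(C, X) = 0}`. -/
def rperp (C : Set (ModuleCat.{0} Λ)) : Set (ModuleCat.{0} Λ) :=
  {X | Module.Finite Λ X ∧ ∀ T ∈ C, ∀ f : ↥T →ₗ[Λ] ↥X, f = 0}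

/-- `^⊥C = {X ∈ mod Λ ∣ Hom(X, C) = 0}`. -/
def lperp (C : Set (ModuleCat.{0} Λ)) : Set (ModuleCat.{0} Λ) :=
  {X | Module.Finite Λ X ∧ ∀ T ∈ C, ∀ f : ↥X →ₗ[Λ] ↥T, f = 0}

/-- The intersection, inside `mod Λ`, of a family of subcategories of `mod Λ`. -/
def interMod (𝒮 : Set (Set (ModuleCat.{0} Λ))) : Set (ModuleCat.{0} Λ) :=
  {X | Module.Finite Λ X ∧ ∀ C ∈ 𝒮, X ∈ C}

/-- `Hom_Λ(X, Y) = 0`. -/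
def HomZero (X Y : ModuleCat.{0} Λ) : Prop := ∀ f : ↥X →ₗ[Λ] ↥Y, f = 0

/-- `X` is an indecomposable module: it is nonzero and its endomorphism ring has no
nontrivial idempotents. -/
def Indecomp (X : ModuleCat.{0} Λ) : Prop :=
  Nontrivial ↥X ∧ ∀ e : ↥X →ₗ[Λ] ↥X, e ∘ₗ e = e → e = 0 ∨ e = LinearMap.id

/-- `Ext¹_Λ(X, Y) ≠ 0` : there is a non-split short exact sequence `0 → Y → E → X → 0`. -/
def Ext1Nonzero (X Y : ModuleCat.{0} Λ) : Prop :=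
  ∃ (E : ModuleCat.{0} Λ) (f : ↥Y →ₗ[Λ] ↥E) (g : ↥E →ₗ[Λ] ↥X),
    IsSES Λ f g ∧ ¬∃ s : ↥X →ₗ[Λ] ↥E, g ∘ₗ s = LinearMap.id

/-- `X` is rigid : `Ext¹_Λ(X, X) = 0`. -/
def IsRigid (X : ModuleCat.{0} Λ) : Prop := ¬ Ext1Nonzero Λ X X

end Torsion

section Statement6

/-- The quotient of `Λ` by the two-sided ideal `⟨e⟩` generated by `e`. -/
abbrev IdemQuot (Λ : Type) [Ring Λ] (e : Λ) : Type :=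
  (TwoSidedIdeal.span {e} : TwoSidedIdeal Λ).ringCon.Quotient


/-! ### Auxiliary development -/

section Aux

variable {Λ : Type} [Ring Λ] {e : Λ}

/-- The quotient map `Λ →+* Λ/⟨e⟩`. -/
def qmap (Λ : Type) [Ring Λ] (e : Λ) : Λ →+* IdemQuot Λ e :=
  (TwoSidedIdeal.span {e} : TwoSidedIdeal Λ).ringCon.mk'

lemma qmap_surjective : Function.Surjective (qmap Λ e) :=
  fun q => Quotient.inductionOn q (fun a => ⟨a, rfl⟩)

lemma qmap_e : qmap Λ e e = 0 := by
  have h : (TwoSidedIdeal.span ({e} : Set Λ)).ringCon e 0 := by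
    rw [TwoSidedIdeal.rel_iff, sub_zero]
    exact TwoSidedIdeal.subset_span rfl
  exact Quotient.sound' h

/-- Elements of `⟨e⟩` annihilate any module annihilated by `e`. -/
lemma span_smul_zero {X : Type} [AddCommGroup X] [Module Λ X]
    (h : ∀ m : X, e • m = 0) {a : Λ} (ha : a ∈ TwoSidedIdeal.span ({e} : Set Λ)) :
    ∀ m : X, a • m = 0 := by
  have : a ∈ TwoSidedIdeal.mk' {a : Λ | ∀ m : X, a • m = 0}
      (by intro m; simp) (fun hx hy m => by rw [add_smul, hx, hy, add_zero])
      (fun hx m => by rw [neg_smul, hx, neg_zero])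
      (fun hy m => by rw [mul_smul, hy, smul_zero])
      (fun hx m => by rw [mul_smul, hx]) := by
    refine TwoSidedIdeal.mem_span_iff.1 ha _ ?_
    intro x hx
    rw [Set.mem_singleton_iff] at hx
    subst hx
    exact (TwoSidedIdeal.mem_mk' _ _ _ _ _ _ _).2 h
  exact (TwoSidedIdeal.mem_mk' _ _ _ _ _ _ _).1 this

end Aux

section Aux2

variable {Λ : Type} [Ring Λ] {e : Λ}

/-- Restriction of scalars along `qmap`. -/
def resObj (X : ModuleCat.{0} (IdemQuot Λ e)) : ModuleCat.{0} Λ :=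
  @ModuleCat.of Λ _ ↥X _ (Module.compHom ↥X (qmap Λ e))

lemma resObj_smul (X : ModuleCat.{0} (IdemQuot Λ e)) (a : Λ) (m : ↥(resObj X)) :
    a • m = qmap Λ e a • (show ↥X from m) := rfl

lemma resObj_ann (X : ModuleCat.{0} (IdemQuot Λ e)) :
    ∀ m : ↥(resObj X), e • m = 0 := by
  intro m
  show qmap Λ e e • (show ↥X from m) = 0
  rw [qmap_e, zero_smul]

/-- `SMul` of the quotient ring on an `e`-annihilated module. -/
def qsmul (X : ModuleCat.{0} Λ) (h : ∀ m : ↥X, e • m = 0) : SMul (IdemQuot Λ e) ↥X :=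
  ⟨fun q m => Quotient.liftOn q (· • m) (by
    intro a b hab
    have : (a - b) • m = 0 :=
      span_smul_zero h ((TwoSidedIdeal.rel_iff _ _ _).1 hab) m
    have := sub_eq_zero.1 (by rwa [sub_smul] at this)
    exact this)⟩

/-- The quotient-ring module structure on an `e`-annihilated module. -/
def quotModule (X : ModuleCat.{0} Λ) (h : ∀ m : ↥X, e • m = 0) :
    Module (IdemQuot Λ e) ↥X :=
  letI := qsmul X h
  Function.Surjective.moduleLeft (qmap Λ e) qmap_surjective (fun _ _ => rfl)

/-- An `e`-annihilated `Λ`-module viewed as a module over the quotient ring. -/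
def quotObj (X : ModuleCat.{0} Λ) (h : ∀ m : ↥X, e • m = 0) :
    ModuleCat.{0} (IdemQuot Λ e) :=
  @ModuleCat.of (IdemQuot Λ e) _ ↥X _ (quotModule X h)

lemma quotObj_smul (X : ModuleCat.{0} Λ) (h : ∀ m : ↥X, e • m = 0) (a : Λ)
    (m : ↥(quotObj X h)) : qmap Λ e a • m = a • (show ↥X from m) := rfl

/-- Equality of `ModuleCat` objects with the same carrier and instances. -/
lemma ModuleCat.eq_of {R : Type} [Ring R] (X Y : ModuleCat.{0} R)
    (hc : ↥X = ↥Y)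
    (hs : ∀ (a : R) (m : ↥X), HEq (a • m : ↥X) ((a • (hc ▸ m) : ↥Y)))
    (hg : HEq X.isAddCommGroup Y.isAddCommGroup) : X = Y := by
  obtain @⟨α, g₁, m₁⟩ := X
  obtain @⟨β, g₂, m₂⟩ := Y
  dsimp at hc
  subst hc
  have hg' : g₁ = g₂ := eq_of_heq hg
  subst hg'
  congr 1
  apply Module.ext'
  intro r m
  exact eq_of_heq (hs r m)

lemma res_quot (X : ModuleCat.{0} Λ) (h : ∀ m : ↥X, e • m = 0) :
    resObj (quotObj X h) = X := by
  refine ModuleCat.eq_of _ _ rfl ?_ HEq.rfl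
  intro a m
  exact heq_of_eq rfl

lemma quot_res (X : ModuleCat.{0} (IdemQuot Λ e)) (h : ∀ m : ↥(resObj X), e • m = 0) :
    quotObj (resObj X) h = X := by
  refine ModuleCat.eq_of _ _ rfl ?_ HEq.rfl
  intro q m
  refine heq_of_eq ?_
  induction q using Quotient.inductionOn with
  | h a => rfl

lemma res_inj : Function.Injective (resObj (Λ := Λ) (e := e)) := by
  have key : ∀ (A B : ModuleCat.{0} Λ) (hA : ∀ m : ↥A, e • m = 0)
      (hB : ∀ m : ↥B, e • m = 0), A = B → quotObj A hA = quotObj B hB := by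
    rintro A B hA hB rfl; rfl
  intro Z Y h
  have hZ := resObj_ann Z
  have hY := resObj_ann Y
  calc Z = quotObj (resObj Z) hZ := (quot_res Z hZ).symm
    _ = quotObj (resObj Y) hY := key _ _ hZ hY h
    _ = Y := quot_res Y hY

end Aux2

section Aux3

variable {Λ : Type} [Ring Λ] {e : Λ}

/-- A `Q`-linear map gives a `Λ`-linear map between restrictions. -/
def toResMap {X Y : ModuleCat.{0} (IdemQuot Λ e)} (f : ↥X →ₗ[IdemQuot Λ e] ↥Y) :
    ↥(resObj X) →ₗ[Λ] ↥(resObj Y) where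
  toFun := f
  map_add' := f.map_add
  map_smul' := fun a m => f.map_smul (qmap Λ e a) m

/-- A `Λ`-linear map between restrictions is `Q`-linear. -/
def toQMap {X Y : ModuleCat.{0} (IdemQuot Λ e)} (f : ↥(resObj X) →ₗ[Λ] ↥(resObj Y)) :
    ↥X →ₗ[IdemQuot Λ e] ↥Y where
  toFun := f
  map_add' := f.map_add
  map_smul' := fun q m => Quotient.inductionOn q (fun a => f.map_smul a m)

/-- A `Λ`-linear map from a restriction into an annihilated module is `Q`-linear
into the quotient module. -/
def toQuotMap {X : ModuleCat.{0} (IdemQuot Λ e)} {Y : ModuleCat.{0} Λ}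
    (f : ↥(resObj X) →ₗ[Λ] ↥Y) (hY : ∀ m : ↥Y, e • m = 0) :
    ↥X →ₗ[IdemQuot Λ e] ↥(quotObj Y hY) where
  toFun := f
  map_add' := f.map_add
  map_smul' := fun q m => Quotient.inductionOn q (fun a => f.map_smul a m)

lemma ann_of_surj {X Y : ModuleCat.{0} Λ} (hX : ∀ m : ↥X, e • m = 0)
    (f : ↥X →ₗ[Λ] ↥Y) (hf : Function.Surjective f) : ∀ m : ↥Y, e • m = 0 := by
  intro m
  obtain ⟨x, rfl⟩ := hf m
  rw [← f.map_smul, hX, f.map_zero]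

lemma ann_of_ses (he : e * e = e) {X Y Z : ModuleCat.{0} Λ}
    (f : ↥X →ₗ[Λ] ↥Y) (g : ↥Y →ₗ[Λ] ↥Z) (hses : IsSES Λ f g)
    (hX : ∀ m : ↥X, e • m = 0) (hZ : ∀ m : ↥Z, e • m = 0) :
    ∀ m : ↥Y, e • m = 0 := by
  obtain ⟨hinj, hsurj, hrk⟩ := hses
  intro m
  have h1 : e • m ∈ LinearMap.ker g := by
    rw [LinearMap.mem_ker, g.map_smul, hZ]
  rw [← hrk] at h1
  obtain ⟨x, hx⟩ := h1
  have h2 : e • e • m = 0 := by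
    rw [← hx, ← f.map_smul, hX, f.map_zero]
  rwa [smul_smul, he] at h2

end Aux3

section Aux4

variable {Λ : Type} [Ring Λ] {e : Λ}

lemma finite_res {X : ModuleCat.{0} (IdemQuot Λ e)} (hX : Module.Finite (IdemQuot Λ e) ↥X) :
    Module.Finite Λ ↥(resObj X) := by
  obtain ⟨n, g, hg⟩ := Module.Finite.exists_fin' (IdemQuot Λ e) ↥X
  let h : (Fin n → Λ) →ₗ[Λ] ↥(resObj X) :=
    { toFun := fun v => g (fun i => qmap Λ e (v i))
      map_add' := fun v w => by
        refine Eq.trans ?_ (g.map_add _ _)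
        exact congrArg g (funext fun i => map_add (qmap Λ e) (v i) (w i))
      map_smul' := fun a v => by
        have : (fun i => qmap Λ e ((a • v) i)) = qmap Λ e a • (fun i => qmap Λ e (v i)) := by
          funext i
          simp [Pi.smul_apply, map_mul]
        show g _ = _
        rw [this, g.map_smul]
        rfl }
  apply Module.Finite.of_surjective h
  intro x
  obtain ⟨w, rfl⟩ := hg x
  refine ⟨fun i => (qmap_surjective (w i)).choose, ?_⟩
  show g _ = g w
  congr 1
  funext i
  exact (qmap_surjective (w i)).choose_spec

lemma finite_quot {X : ModuleCat.{0} (IdemQuot Λ e)} (hX : Module.Finite Λ ↥(resObj X)) :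
    Module.Finite (IdemQuot Λ e) ↥X := by
  obtain ⟨n, g, hg⟩ := Module.Finite.exists_fin' Λ ↥(resObj X)
  let s : Fin n → ↥X := fun i => g (Pi.single i 1)
  let h : (Fin n → IdemQuot Λ e) →ₗ[IdemQuot Λ e] ↥X :=
    { toFun := fun v => ∑ i, v i • s i
      map_add' := fun v w => by
        show ∑ i, (v + w) i • s i = ∑ i, v i • s i + ∑ i, w i • s i
        rw [← Finset.sum_add_distrib]
        exact Finset.sum_congr rfl fun i _ => by rw [Pi.add_apply, add_smul]
      map_smul' := fun q v => by
        show ∑ i, (q * v i) • s i = q • ∑ i, v i • s i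
        rw [Finset.smul_sum]
        congr 1
        funext i
        rw [mul_smul] }
  apply Module.Finite.of_surjective h
  intro x
  obtain ⟨u, rfl⟩ := hg x
  refine ⟨fun i => qmap Λ e (u i), ?_⟩
  show ∑ i, qmap Λ e (u i) • s i = g u
  have hu : u = ∑ i, Pi.single i (u i) := (Finset.univ_sum_single u).symm
  conv_rhs => rw [hu]
  rw [map_sum]
  congr 1
  funext i
  have h1 : Pi.single i (u i) = u i • (Pi.single i 1 : Fin n → Λ) := by
    funext j
    by_cases hij : j = i
    · subst hij; simp
    · simp [Pi.single_eq_of_ne hij]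
  rw [h1, g.map_smul]
  rfl

end Aux4

section Aux5

variable {Λ : Type} [Ring Λ] {e : Λ}

lemma fac_res (X' : ModuleCat.{0} (IdemQuot Λ e)) :
    resObj '' (Fac (IdemQuot Λ e) X') = Fac Λ (resObj X') := by
  ext Y
  constructor
  · rintro ⟨Y', ⟨n, g, hg⟩, rfl⟩
    exact ⟨n,
      { toFun := g
        map_add' := g.map_add
        map_smul' := fun a v => g.map_smul (qmap Λ e a) v }, hg⟩
  · rintro ⟨n, f, hf⟩
    have hY : ∀ m : ↥Y, e • m = 0 := by
      intro m
      obtain ⟨v, rfl⟩ := hf m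
      have hv : (e • v : Fin n → ↥(resObj X')) = 0 :=
        funext fun i => resObj_ann X' (v i)
      rw [← f.map_smul, hv, f.map_zero]
    refine ⟨quotObj Y hY, ⟨n,
      { toFun := f
        map_add' := f.map_add
        map_smul' := fun q v => Quotient.inductionOn q (fun a => f.map_smul a v) }, hf⟩,
      res_quot Y hY⟩

/-- `mod (Λ/⟨e⟩)` viewed inside `mod Λ` : finite modules annihilated by `e`. -/
def Mtop (Λ : Type) [Ring Λ] (e : Λ) : Set (ModuleCat.{0} Λ) :=
  {X | Module.Finite Λ ↥X ∧ ∀ m : ↥X, e • m = 0}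

lemma fac_Q_top (X' : ModuleCat.{0} (IdemQuot Λ e)) :
    X' ∈ Fac (IdemQuot Λ e) (ModuleCat.of (IdemQuot Λ e) (IdemQuot Λ e)) ↔
      Module.Finite (IdemQuot Λ e) ↥X' := by
  constructor
  · rintro ⟨n, f, hf⟩
    haveI : Module.Finite (IdemQuot Λ e)
        (Fin n → ↥(ModuleCat.of (IdemQuot Λ e) (IdemQuot Λ e))) :=
      inferInstanceAs (Module.Finite (IdemQuot Λ e) (Fin n → IdemQuot Λ e))
    exact Module.Finite.of_surjective f hf
  · intro hX
    obtain ⟨n, f, hf⟩ := Module.Finite.exists_fin' (IdemQuot Λ e) ↥X'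
    exact ⟨n, f, hf⟩

lemma res_image_top :
    resObj '' {X' : ModuleCat.{0} (IdemQuot Λ e) | Module.Finite (IdemQuot Λ e) ↥X'} =
      Mtop Λ e := by
  ext X
  constructor
  · rintro ⟨X', hX', rfl⟩
    exact ⟨finite_res hX', resObj_ann X'⟩
  · rintro ⟨h1, h2⟩
    refine ⟨quotObj X h2, ?_, res_quot X h2⟩
    apply finite_quot
    rw [res_quot X h2]
    exact h1

lemma fac_Mtop :
    Fac Λ (resObj (ModuleCat.of (IdemQuot Λ e) (IdemQuot Λ e))) = Mtop Λ e := by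
  rw [← fac_res]
  have h : Fac (IdemQuot Λ e) (ModuleCat.of (IdemQuot Λ e) (IdemQuot Λ e)) =
      {X' : ModuleCat.{0} (IdemQuot Λ e) | Module.Finite (IdemQuot Λ e) ↥X'} :=
    Set.ext fun X' => fac_Q_top X'
  rw [h, res_image_top]

lemma finite_of_ses {X Y Z : ModuleCat.{0} Λ} (f : ↥X →ₗ[Λ] ↥Y) (g : ↥Y →ₗ[Λ] ↥Z)
    (hses : IsSES Λ f g) (hX : Module.Finite Λ ↥X) (hZ : Module.Finite Λ ↥Z) :
    Module.Finite Λ ↥Y := by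
  obtain ⟨hinj, hsurj, hrk⟩ := hses
  constructor
  apply Submodule.fg_of_fg_map_of_fg_inf_ker g
  · rw [Submodule.map_top, LinearMap.range_eq_top.2 hsurj]
    exact hZ.1
  · rw [top_inf_eq, ← hrk, ← Submodule.map_top]
    exact Submodule.FG.map f hX.1
end Aux5

section Aux6

variable {Λ : Type} [Ring Λ] {e : Λ}

/-- A `Λ`-linear map out of a quotient module into a restriction is `Q`-linear. -/
def fromQuotMap {Y : ModuleCat.{0} Λ} (hY : ∀ m : ↥Y, e • m = 0)
    {Z : ModuleCat.{0} (IdemQuot Λ e)} (g : ↥Y →ₗ[Λ] ↥(resObj Z)) :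
    ↥(quotObj Y hY) →ₗ[IdemQuot Λ e] ↥Z where
  toFun := g
  map_add' := g.map_add
  map_smul' := fun q m => Quotient.inductionOn q (fun a => g.map_smul a m)

lemma lemA (he : e * e = e) {C' : Set (ModuleCat.{0} (IdemQuot Λ e))}
    (h : IsFTorsionClass (IdemQuot Λ e) C') :
    IsFTorsionClass Λ (resObj '' C') ∧ ∀ X ∈ resObj '' C', ∀ m : ↥X, e • m = 0 := by
  obtain ⟨⟨hfin, hquot, hext⟩, hfac⟩ := h
  refine ⟨⟨⟨?_, ?_, ?_⟩, ?_⟩, ?_⟩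
  · rintro X ⟨X', hX', rfl⟩
    exact finite_res (hfin X' hX')
  · rintro X ⟨X', hX', rfl⟩ Y f hf
    have hY := ann_of_surj (resObj_ann X') f hf
    rw [← res_quot Y hY]
    exact ⟨quotObj Y hY, hquot X' hX' (quotObj Y hY) (toQuotMap f hY) hf, rfl⟩
  · rintro X Y Z f g hses ⟨X', hX', rfl⟩ ⟨Z', hZ', rfl⟩
    have hY := ann_of_ses he f g hses (resObj_ann X') (resObj_ann Z')
    rw [← res_quot Y hY]
    refine ⟨quotObj Y hY, ?_, rfl⟩
    refine hext X' (quotObj Y hY) Z' (toQuotMap f hY) (fromQuotMap hY g)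
      ⟨hses.1, hses.2.1, ?_⟩ hX' hZ'
    exact Submodule.ext fun m => SetLike.ext_iff.1 hses.2.2 m
  · obtain ⟨X', hX'fin, rfl⟩ := hfac
    exact ⟨resObj X', finite_res hX'fin, fac_res X'⟩
  · rintro X ⟨X', _, rfl⟩ m
    exact resObj_ann X' m

lemma lemB {C : Set (ModuleCat.{0} Λ)} (h : IsFTorsionClass Λ C)
    (hann : ∀ X ∈ C, ∀ m : ↥X, e • m = 0) :
    IsFTorsionClass (IdemQuot Λ e) (resObj ⁻¹' C) := by
  obtain ⟨⟨hfin, hquot, hext⟩, hfac⟩ := h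
  refine ⟨⟨?_, ?_, ?_⟩, ?_⟩
  · intro X' hX'
    exact finite_quot (hfin _ hX')
  · intro X' hX' Y' f hf
    exact hquot (resObj X') hX' (resObj Y') (toResMap f) hf
  · intro X' Y' Z' f g hses hX hZ
    refine hext (resObj X') (resObj Y') (resObj Z') (toResMap f) (toResMap g)
      ⟨hses.1, hses.2.1, ?_⟩ hX hZ
    exact Submodule.ext fun m => SetLike.ext_iff.1 hses.2.2 m
  · obtain ⟨X, hXfin, rfl⟩ := hfac
    have hXmem : X ∈ Fac Λ X := ⟨1, LinearMap.proj 0, fun m => ⟨fun _ => m, rfl⟩⟩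
    have hXann := hann X hXmem
    have hXfin' : Module.Finite (IdemQuot Λ e) ↥(quotObj X hXann) := by
      apply finite_quot
      rw [res_quot X hXann]
      exact hXfin
    refine ⟨quotObj X hXann, hXfin', ?_⟩
    have h1 : Fac Λ X = resObj '' Fac (IdemQuot Λ e) (quotObj X hXann) := by
      rw [fac_res, res_quot]
    ext Y'
    simp only [Set.mem_preimage, h1]
    constructor
    · rintro ⟨Z', hZ', hzz⟩
      exact res_inj hzz ▸ hZ'
    · exact fun hY' => ⟨Y', hY', rfl⟩

end Aux6

section Aux7

variable {Λ : Type} [Ring Λ] {e : Λ}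

lemma top_ff :
    IsFTorsionClass (IdemQuot Λ e)
      (Fac (IdemQuot Λ e) (ModuleCat.of (IdemQuot Λ e) (IdemQuot Λ e))) := by
  refine ⟨⟨?_, ?_, ?_⟩, ModuleCat.of (IdemQuot Λ e) (IdemQuot Λ e),
    inferInstanceAs (Module.Finite (IdemQuot Λ e) (IdemQuot Λ e)), rfl⟩
  · intro X hX
    exact (fac_Q_top X).1 hX
  · intro X hX Y f hf
    refine (fac_Q_top Y).2 ?_
    haveI := (fac_Q_top X).1 hX
    exact Module.Finite.of_surjective f hf
  · intro X Y Z f g hses hX hZ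
    exact (fac_Q_top Y).2 (finite_of_ses f g hses ((fac_Q_top X).1 hX) ((fac_Q_top Z).1 hZ))

lemma Mtop_ff (he : e * e = e) : IsFTorsionClass Λ (Mtop Λ e) := by
  have h := (lemA he top_ff).1
  rwa [fac_res, fac_Mtop] at h

/-- Intersecting with `Mtop` preserves functorially finite torsion classes. -/
lemma inter_ff (he : e * e = e) {C : Set (ModuleCat.{0} Λ)} (h : IsFTorsionClass Λ C) :
    IsFTorsionClass Λ (C ∩ Mtop Λ e) := by
  obtain ⟨⟨hfin, hquot, hext⟩, X, hXfin, rfl⟩ := h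
  obtain ⟨⟨hfinM, hquotM, hextM⟩, _⟩ := Mtop_ff (e := e) he
  constructor
  · exact ⟨fun Y hY => hfin Y hY.1,
      fun Y hY Z f hf => ⟨hquot Y hY.1 Z f hf, hquotM Y hY.2 Z f hf⟩,
      fun A B C f g hses hA hC =>
        ⟨hext A B C f g hses hA.1 hC.1, hextM A B C f g hses hA.2 hC.2⟩⟩
  -- functorial finiteness: `Fac X ∩ Mtop = Fac (X / span {e • x})`
  classical
  set N : Submodule Λ ↥X := Submodule.span Λ (Set.range (fun x : ↥X => e • x)) with hN
  set Xbar : ModuleCat.{0} Λ := ModuleCat.of Λ (↥X ⧸ N) with hXbar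
  have hbar_ann : ∀ m : ↥Xbar, e • m = 0 := by
    intro m
    obtain ⟨x, rfl⟩ := Submodule.mkQ_surjective N m
    show e • N.mkQ x = 0
    rw [← N.mkQ.map_smul]
    rw [Submodule.mkQ_apply, Submodule.Quotient.mk_eq_zero]
    exact Submodule.subset_span ⟨x, rfl⟩
  have hbar_fin : Module.Finite Λ ↥Xbar :=
    Module.Finite.of_surjective N.mkQ (Submodule.mkQ_surjective N)
  refine ⟨Xbar, hbar_fin, ?_⟩
  ext Y
  constructor
  · rintro ⟨⟨n, f, hf⟩, hYfin, hYann⟩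
    -- build a surjection `(Fin n → Xbar) → Y`
    let φ : Fin n → (↥X →ₗ[Λ] ↥Y) :=
      fun i => f.comp (LinearMap.single Λ (fun _ : Fin n => ↥X) i)
    have hφ : ∀ i, N ≤ LinearMap.ker (φ i) := by
      intro i
      rw [hN, Submodule.span_le]
      rintro _ ⟨x, rfl⟩
      rw [SetLike.mem_coe, LinearMap.mem_ker, map_smul]
      exact hYann _
    let ψ : Fin n → (↥Xbar →ₗ[Λ] ↥Y) := fun i => N.liftQ (φ i) (hφ i)
    let F : (Fin n → ↥Xbar) →ₗ[Λ] ↥Y := ∑ i, (ψ i).comp (LinearMap.proj i)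
    refine ⟨n, F, ?_⟩
    intro y
    obtain ⟨v, rfl⟩ := hf y
    refine ⟨fun i => Submodule.Quotient.mk (v i), ?_⟩
    have hFapp : F (fun i => Submodule.Quotient.mk (v i)) = ∑ i, φ i (v i) := by
      rw [LinearMap.sum_apply]
      refine Finset.sum_congr rfl fun i _ => ?_
      rw [LinearMap.comp_apply]
      exact Submodule.liftQ_apply N (φ i) (v i)
    rw [hFapp]
    have : ∑ i, φ i (v i) = f (∑ i, Pi.single i (v i)) := by
      rw [map_sum]
      exact Finset.sum_congr rfl fun i _ => rfl
    rw [this, Finset.univ_sum_single]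
  · rintro ⟨n, f, hf⟩
    have hYann : ∀ m : ↥Y, e • m = 0 := by
      intro m
      obtain ⟨v, rfl⟩ := hf m
      have hv : (e • v : Fin n → ↥Xbar) = 0 := funext fun i => hbar_ann (v i)
      rw [← f.map_smul, hv, f.map_zero]
    have hYfin : Module.Finite Λ ↥Y := by
      haveI := hbar_fin
      haveI : Module.Finite Λ (Fin n → ↥Xbar) := inferInstance
      exact Module.Finite.of_surjective f hf
    refine ⟨⟨n, f.comp (LinearMap.pi (fun i => N.mkQ.comp (LinearMap.proj i))), ?_⟩,
      hYfin, hYann⟩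
    apply hf.comp
    intro w
    refine ⟨fun i => (Submodule.mkQ_surjective N (w i)).choose, ?_⟩
    funext i
    exact (Submodule.mkQ_surjective N (w i)).choose_spec

end Aux7

section Aux8

variable {P : Type*} [PartialOrder P] {M : P}

lemma down_hasJoin (r : P → {x : P // x ≤ M})
    (hr1 : ∀ x, (r x).val ≤ x) (hr2 : ∀ x, x ≤ M → (r x).val = x)
    (hr3 : ∀ (s : {x : P // x ≤ M}) (x : P), s.val ≤ x → s.val ≤ (r x).val)
    (S₀ : Set {x : P // x ≤ M}) (hj : HasJoin (Subtype.val '' S₀)) : HasJoin S₀ := by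
  obtain ⟨j, ⟨hjub, hjmin⟩, hjuniq⟩ := hj
  have memlift : ∀ y : {x : P // x ≤ M}, y ∈ upperBounds S₀ →
      y.val ∈ upperBounds (Subtype.val '' S₀) := by
    rintro y hy _ ⟨s, hs, rfl⟩
    exact hy hs
  refine ⟨r j, ⟨?_, ?_⟩, ?_⟩
  · intro s hs
    exact hr3 s j (hjub (Set.mem_image_of_mem _ hs))
  · intro u hu hle
    have h2 : u.val ≤ j := le_trans hle (hr1 j)
    have h3 : u.val = j := hjmin u.val (memlift u hu) h2
    apply Subtype.ext
    rw [hr2 j (h3 ▸ u.2)]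
    exact h3
  · intro y hy
    have hymin : MinimalIn (upperBounds (Subtype.val '' S₀)) y.val := by
      refine ⟨memlift y hy.1, ?_⟩
      intro z hz hzy
      have hzM : z ≤ M := le_trans hzy y.2
      have hzub : (⟨z, hzM⟩ : {x : P // x ≤ M}) ∈ upperBounds S₀ := by
        intro s hs
        exact hz (Set.mem_image_of_mem _ hs)
      have := hy.2 ⟨z, hzM⟩ hzub hzy
      exact congrArg Subtype.val this
    have hyj : y.val = j := hjuniq y.val hymin
    apply Subtype.ext
    rw [hr2 j (hyj ▸ y.2)]
    exact hyj

lemma down_hasMeet (S₀ : Set {x : P // x ≤ M})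
    (hm : HasMeet (Subtype.val '' S₀ ∪ {M})) : HasMeet S₀ := by
  obtain ⟨m, ⟨hmlb, hmmax⟩, hmuniq⟩ := hm
  have hmM : m ≤ M := hmlb (Set.mem_union_right _ rfl)
  have memlift : ∀ y : {x : P // x ≤ M}, y ∈ lowerBounds S₀ →
      y.val ∈ lowerBounds (Subtype.val '' S₀ ∪ {M}) := by
    rintro y hy z hz
    rcases hz with ⟨s, hs, rfl⟩ | hz
    · exact hy hs
    · rw [Set.mem_singleton_iff] at hz
      rw [hz]
      exact y.2
  refine ⟨⟨m, hmM⟩, ⟨?_, ?_⟩, ?_⟩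
  · intro t ht
    exact hmlb (Set.mem_union_left _ (Set.mem_image_of_mem _ ht))
  · intro y hy hle
    exact Subtype.ext (hmmax y.val (memlift y hy) hle)
  · intro y hy
    have hymax : MaximalIn (lowerBounds (Subtype.val '' S₀ ∪ {M})) y.val := by
      refine ⟨memlift y hy.1, ?_⟩
      intro z hz hyz
      have hzM : z ≤ M := hz (Set.mem_union_right _ rfl)
      have hzlb : (⟨z, hzM⟩ : {x : P // x ≤ M}) ∈ lowerBounds S₀ := by
        intro s hs
        exact hz (Set.mem_union_left _ (Set.mem_image_of_mem _ hs))
      exact congrArg Subtype.val (hy.2 ⟨z, hzM⟩ hzlb hyz)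
    exact Subtype.ext (hmuniq y.val hymax)

end Aux8

section Aux9

variable {P P' : Type*} [PartialOrder P] [PartialOrder P'] (f : P ≃o P')

lemma orderIso_lowerBounds (S : Set P) (y : P') :
    y ∈ lowerBounds (f '' S) ↔ f.symm y ∈ lowerBounds S := by
  constructor
  · intro hy t ht
    rw [← f.symm_apply_apply t]
    exact f.symm.monotone (hy (Set.mem_image_of_mem _ ht))
  · rintro hy _ ⟨t, ht, rfl⟩
    rw [← f.apply_symm_apply y]
    exact f.monotone (hy ht)

lemma orderIso_upperBounds (S : Set P) (y : P') :
    y ∈ upperBounds (f '' S) ↔ f.symm y ∈ upperBounds S := by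
  constructor
  · intro hy t ht
    rw [← f.symm_apply_apply t]
    exact f.symm.monotone (hy (Set.mem_image_of_mem _ ht))
  · rintro hy _ ⟨t, ht, rfl⟩
    rw [← f.apply_symm_apply y]
    exact f.monotone (hy ht)

lemma orderIso_isMeetOf {S : Set P} {m : P} (h : IsMeetOf S m) : IsMeetOf (f '' S) (f m) := by
  obtain ⟨⟨hmem, hmax⟩, huniq⟩ := h
  refine ⟨⟨?_, ?_⟩, ?_⟩
  · rw [orderIso_lowerBounds f, f.symm_apply_apply]
    exact hmem
  · intro y hy hle
    rw [orderIso_lowerBounds f] at hy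
    have h2 : m ≤ f.symm y := by
      rw [← f.symm_apply_apply m]
      exact f.symm.monotone hle
    have h3 := hmax (f.symm y) hy h2
    rw [← h3, f.apply_symm_apply]
  · intro y hy
    have : MaximalIn (lowerBounds S) (f.symm y) := by
      refine ⟨(orderIso_lowerBounds f S y).1 hy.1, ?_⟩
      intro z hz hle
      have h4 : y ≤ f z := by
        rw [← f.apply_symm_apply y]
        exact f.monotone hle
      have h5 := hy.2 (f z) (by rw [orderIso_lowerBounds f, f.symm_apply_apply]; exact hz) h4
      rw [← h5, f.symm_apply_apply]
    have h6 := huniq (f.symm y) this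
    rw [← h6, f.apply_symm_apply]

lemma orderIso_isJoinOf {S : Set P} {m : P} (h : IsJoinOf S m) : IsJoinOf (f '' S) (f m) := by
  obtain ⟨⟨hmem, hmin⟩, huniq⟩ := h
  refine ⟨⟨?_, ?_⟩, ?_⟩
  · rw [orderIso_upperBounds f, f.symm_apply_apply]
    exact hmem
  · intro y hy hle
    rw [orderIso_upperBounds f] at hy
    have h2 : f.symm y ≤ m := by
      rw [← f.symm_apply_apply m]
      exact f.symm.monotone hle
    have h3 := hmin (f.symm y) hy h2
    rw [← h3, f.apply_symm_apply]
  · intro y hy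
    have : MinimalIn (upperBounds S) (f.symm y) := by
      refine ⟨(orderIso_upperBounds f S y).1 hy.1, ?_⟩
      intro z hz hle
      have h4 : f z ≤ y := by
        rw [← f.apply_symm_apply y]
        exact f.monotone hle
      have h5 := hy.2 (f z) (by rw [orderIso_upperBounds f, f.symm_apply_apply]; exact hz) h4
      rw [← h5, f.symm_apply_apply]
    have h6 := huniq (f.symm y) this
    rw [← h6, f.apply_symm_apply]

lemma orderIso_hasMeet (S' : Set P') (h : HasMeet (f.symm '' S')) : HasMeet S' := by
  obtain ⟨m, hm⟩ := h
  refine ⟨f m, ?_⟩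
  have := orderIso_isMeetOf f hm
  rwa [Set.image_image, show (fun x => f (f.symm x)) = id from funext fun x => f.apply_symm_apply x,
    Set.image_id] at this

lemma orderIso_hasJoin (S' : Set P') (h : HasJoin (f.symm '' S')) : HasJoin S' := by
  obtain ⟨m, hm⟩ := h
  refine ⟨f m, ?_⟩
  have := orderIso_isJoinOf f hm
  rwa [Set.image_image, show (fun x => f (f.symm x)) = id from funext fun x => f.apply_symm_apply x,
    Set.image_id] at this

end Aux9

section Aux10

variable {Λ : Type} [Ring Λ] {e : Λ}

/-- The order isomorphism between `ftors (Λ/⟨e⟩)` and the interval of torsion classes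
annihilated by `e`. -/
def theIso (he : e * e = e) :
    FTors (IdemQuot Λ e) ≃o {T : FTors Λ // ∀ X ∈ T.val, ∀ m : ↥X, e • m = 0} where
  toFun C' := ⟨⟨resObj '' C'.val, (lemA he C'.2).1⟩, (lemA he C'.2).2⟩
  invFun T := ⟨resObj ⁻¹' T.val.val, lemB T.val.2 T.2⟩
  left_inv C' := by
    apply Subtype.ext
    show resObj ⁻¹' (resObj '' C'.val) = C'.val
    ext Y'
    simp only [Set.mem_preimage]
    constructor
    · rintro ⟨Z', hZ', hzz⟩
      exact res_inj hzz ▸ hZ'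
    · intro h
      exact ⟨Y', h, rfl⟩
  right_inv T := by
    apply Subtype.ext
    apply Subtype.ext
    show resObj '' (resObj ⁻¹' T.val.val) = T.val.val
    ext X
    constructor
    · rintro ⟨X', hX', rfl⟩
      exact hX'
    · intro hX
      have hXa := T.2 X hX
      refine ⟨quotObj X hXa, ?_, res_quot X hXa⟩
      show resObj (quotObj X hXa) ∈ T.val.val
      rw [res_quot]
      exact hX
  map_rel_iff' := @fun C' D' => by
    constructor
    · intro h Y' hY'
      have h2 : resObj Y' ∈ resObj '' D'.val := h ⟨Y', hY', rfl⟩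
      obtain ⟨Z', hZ', hzz⟩ := h2
      exact res_inj hzz ▸ hZ'
    · rintro h _ ⟨Y', hY', rfl⟩
      exact ⟨Y', h hY', rfl⟩

/-- `Mtop` as a functorially finite torsion class. -/
def MtopF (Λ : Type) [Ring Λ] (e : Λ) (he : e * e = e) : FTors Λ :=
  ⟨Mtop Λ e, Mtop_ff he⟩

/-- The interval as a down-set. -/
def iso2 (he : e * e = e) :
    {T : FTors Λ // ∀ X ∈ T.val, ∀ m : ↥X, e • m = 0} ≃o
      {T : FTors Λ // T ≤ MtopF Λ e he} where
  toFun T := ⟨T.val, fun X hX => ⟨T.val.2.1.1 X hX, T.2 X hX⟩⟩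
  invFun T := ⟨T.val, fun X hX m => (T.2 hX).2 m⟩
  left_inv T := rfl
  right_inv T := rfl
  map_rel_iff' := Iff.rfl

/-- The retraction onto the interval. -/
def rtr (he : e * e = e) (T : FTors Λ) : {T : FTors Λ // T ≤ MtopF Λ e he} :=
  ⟨⟨T.val ∩ Mtop Λ e, inter_ff he T.2⟩, fun X hX => hX.2⟩

lemma rtr_le (he : e * e = e) (T : FTors Λ) : (rtr he T).val ≤ T :=
  fun X hX => hX.1

lemma rtr_eq (he : e * e = e) (T : FTors Λ) (h : T ≤ MtopF Λ e he) : (rtr he T).val = T := by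
  apply Subtype.ext
  show T.val ∩ Mtop Λ e = T.val
  exact Set.inter_eq_left.2 h

lemma rtr_ge (he : e * e = e) (s : {T : FTors Λ // T ≤ MtopF Λ e he}) (T : FTors Λ)
    (h : s.val ≤ T) : s.val ≤ (rtr he T).val :=
  fun X hX => ⟨h hX, s.2 hX⟩

lemma transfer_hasMeet (he : e * e = e) (S' : Set (FTors (IdemQuot Λ e)))
    (h : HasMeet ((Subtype.val '' (((theIso he).trans (iso2 he)) '' S')) ∪ {MtopF Λ e he})) :
    HasMeet S' := by
  have h1 := down_hasMeet _ h
  apply orderIso_hasMeet ((theIso he).trans (iso2 he)).symm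
  rwa [show (((theIso he).trans (iso2 he)).symm.symm : FTors (IdemQuot Λ e) →
    {T : FTors Λ // T ≤ MtopF Λ e he}) = ((theIso he).trans (iso2 he) :
      FTors (IdemQuot Λ e) → {T : FTors Λ // T ≤ MtopF Λ e he}) from rfl]

lemma transfer_hasJoin (he : e * e = e) (S' : Set (FTors (IdemQuot Λ e)))
    (h : HasJoin (Subtype.val '' (((theIso he).trans (iso2 he)) '' S'))) :
    HasJoin S' := by
  have h1 := down_hasJoin (rtr he) (rtr_le he) (rtr_eq he) (rtr_ge he) _ h
  apply orderIso_hasJoin ((theIso he).trans (iso2 he)).symm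
  rwa [show (((theIso he).trans (iso2 he)).symm.symm : FTors (IdemQuot Λ e) →
    {T : FTors Λ // T ≤ MtopF Λ e he}) = ((theIso he).trans (iso2 he) :
      FTors (IdemQuot Λ e) → {T : FTors Λ // T ≤ MtopF Λ e he}) from rfl]

end Aux10
/-- **Proposition 1.7.** Let `e` be an idempotent of `Λ`. Then `ftors (Λ/⟨e⟩)` is
isomorphic, as a poset, to the interval
`{T ∈ ftors Λ ∣ 0 ⊆ T ⊆ mod (Λ/⟨e⟩)}` in `ftors Λ` (where `mod (Λ/⟨e⟩)` is identified
with the modules annihilated by `e`); in particular, if `ftors Λ` is a lattice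
(respectively a complete lattice), then so is `ftors (Λ/⟨e⟩)`. -/
theorem idempotent_quotient_lattice (k Λ : Type) [Field k] [IsAlgClosed k]
    [Ring Λ] [Algebra k Λ] [FiniteDimensional k Λ] (e : Λ) (he : e * e = e) :
    Nonempty
      (FTors (IdemQuot Λ e) ≃o
        {T : FTors Λ // ∀ X ∈ T.val, ∀ m : ↥X, e • m = 0}) ∧
    (IsLatticePoset (FTors Λ) → IsLatticePoset (FTors (IdemQuot Λ e))) ∧
    (IsCompleteLatticePoset (FTors Λ) →
      IsCompleteLatticePoset (FTors (IdemQuot Λ e))) := by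
  refine ⟨⟨theIso he⟩, ?_, ?_⟩
  · rintro ⟨hjoin, hmeet⟩
    constructor
    · intro S' hS'
      apply transfer_hasJoin he
      exact hjoin _ ((hS'.image _).image _)
    · intro S' hS'
      apply transfer_hasMeet he
      exact hmeet _ (((hS'.image _).image _).union (Set.finite_singleton _))
  · intro hcomp
    intro S'
    constructor
    · exact transfer_hasMeet he _ (hcomp _).1
    · exact transfer_hasJoin he _ (hcomp _).2

end Statement6
end TorsionLattice
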